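/- Consider the iteration Q_q(w) = w ×ₛ^{(2,1)} w + q on pure quaternions, where ×ₛ^{(2,1)} doubles the angle φ, keeps θ, and squares the radius. For q = ak + bi + cj and the quaternion p = a + bi + cj, every iterate satisfies Q_q^(n)(0) = ρₙ[k cos φₙ + sin φₙ·(bi + cj)/√(b²+c²)] and P_p^(n)(0) = ρₙ[cos φₙ + sin φₙ·(bi + cj)/√(b²+c²)] with the same ρₙ, φₙ, where P_p(z) = z² + p uses quaternion multiplication. Hence the set M^{(2,1)} has the same dynamics as the 3D slice H(1,i,j) of the quaternionic Mandelbrot set. -/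

import Mathlib

open scoped Quaternion
open Bornology

noncomputable def sCoord (ρ θ φ : ℝ) : ℍ[ℝ] :=
  ⟨0, ρ * (Real.sin φ * Real.cos θ), ρ * (Real.sin φ * Real.sin θ), ρ * Real.cos φ⟩

noncomputable def sphRho (q : ℍ[ℝ]) : ℝ := ‖q‖

noncomputable def sphTheta (q : ℍ[ℝ]) : ℝ :=
  if q.imI = 0 ∧ q.imJ = 0 then 0
  else if Complex.arg ⟨q.imI, q.imJ⟩ < 0 then Complex.arg ⟨q.imI, q.imJ⟩ + 2 * Real.pi
  else Complex.arg ⟨q.imI, q.imJ⟩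

open Classical in
noncomputable def sphPhi (q : ℍ[ℝ]) : ℝ :=
  if q = 0 then 0 else Real.arccos (q.imK / ‖q‖)

noncomputable def sprod (q₁ q₂ : ℍ[ℝ]) : ℍ[ℝ] :=
  sCoord (sphRho q₁ * sphRho q₂) (sphTheta q₁ + sphTheta q₂) (sphPhi q₁ + sphPhi q₂)

noncomputable def spow (n : ℕ) (q : ℍ[ℝ]) : ℍ[ℝ] :=
  sCoord (sphRho q ^ n) (n * sphTheta q) (n * sphPhi q)

def qmk (a b c d : ℝ) : ℍ[ℝ] := ⟨a, b, c, d⟩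

/-- For q = ak + bi + cj and p = a + bi + cj (with (b,c) ≠ (0,0)), the
iterates of Q_q(w) = w ×ₛ^{(2,1)} w + q and of P_p(z) = z² + p have the same
data ρₙ, φₙ; hence M^{(2,1)} has the same dynamics as the slice H(1,i,j) of
the quaternionic Mandelbrot set. -/
private lemma qnorm_eq (q : ℍ[ℝ]) :
    ‖q‖ = Real.sqrt (q.re ^ 2 + q.imI ^ 2 + q.imJ ^ 2 + q.imK ^ 2) := by
  rw [norm_eq_sqrt_real_inner, Quaternion.inner_self, Quaternion.normSq_def']

private lemma Qcore (b c x y : ℝ) (hbc : (b, c) ≠ (0, 0)) :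
    sCoord (sphRho (⟨0, y * (b / Real.sqrt (b ^ 2 + c ^ 2)), y * (c / Real.sqrt (b ^ 2 + c ^ 2)), x⟩ : ℍ[ℝ]) ^ 2)
        (sphTheta (⟨0, y * (b / Real.sqrt (b ^ 2 + c ^ 2)), y * (c / Real.sqrt (b ^ 2 + c ^ 2)), x⟩ : ℍ[ℝ]))
        (2 * sphPhi (⟨0, y * (b / Real.sqrt (b ^ 2 + c ^ 2)), y * (c / Real.sqrt (b ^ 2 + c ^ 2)), x⟩ : ℍ[ℝ])) =
      (⟨0, 2 * x * y * (b / Real.sqrt (b ^ 2 + c ^ 2)), 2 * x * y * (c / Real.sqrt (b ^ 2 + c ^ 2)),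
          x ^ 2 - y ^ 2⟩ : ℍ[ℝ]) := by
  have hbc' : b ≠ 0 ∨ c ≠ 0 := by
    by_contra h; push_neg at h; exact hbc (by simp [h.1, h.2])
  have hpos : 0 < b ^ 2 + c ^ 2 := by rcases hbc' with h | h <;> positivity
  set β := Real.sqrt (b ^ 2 + c ^ 2) with hβdef
  have hβpos : 0 < β := Real.sqrt_pos.2 hpos
  have hβ2 : β ^ 2 = b ^ 2 + c ^ 2 := Real.sq_sqrt hpos.le
  have hβne : β ≠ 0 := hβpos.ne'
  set w : ℍ[ℝ] := (⟨0, y * (b / β), y * (c / β), x⟩ : ℍ[ℝ]) with hw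
  have hwI : w.imI = y * (b / β) := rfl
  have hwJ : w.imJ = y * (c / β) := rfl
  have hwK : w.imK = x := rfl
  have hunit : (b / β) ^ 2 + (c / β) ^ 2 = 1 := by
    field_simp
    linarith [hβ2]
  have hnorm : ‖w‖ = Real.sqrt (x ^ 2 + y ^ 2) := by
    rw [qnorm_eq]
    congr 1
    show (0:ℝ) ^ 2 + (y * (b / β)) ^ 2 + (y * (c / β)) ^ 2 + x ^ 2 = x ^ 2 + y ^ 2
    linear_combination y ^ 2 * hunit
  by_cases h0 : x = 0 ∧ y = 0
  · obtain ⟨hx, hy⟩ := h0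
    have hw0 : w = 0 := by
      rw [hw, hx, hy]; simp [Quaternion.ext_iff]; rfl
    rw [hw0]
    simp [sphPhi, sphRho, sCoord, Quaternion.ext_iff, hx, hy]
    rfl
  · set r := Real.sqrt (x ^ 2 + y ^ 2) with hr
    have hxy : 0 < x ^ 2 + y ^ 2 := by
      rcases not_and_or.1 h0 with h | h <;> positivity
    have hrpos : 0 < r := Real.sqrt_pos.2 hxy
    have hr2 : r ^ 2 = x ^ 2 + y ^ 2 := Real.sq_sqrt hxy.le
    have hrne : r ≠ 0 := hrpos.ne'
    have hwne : w ≠ 0 := by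
      intro h
      rw [h, norm_zero] at hnorm
      exact hrne hnorm.symm
    have hphi : sphPhi w = Real.arccos (x / r) := by
      rw [sphPhi, if_neg hwne, hnorm, hwK]
    have habs : |x| ≤ r := by
      calc |x| = Real.sqrt (x ^ 2) := (Real.sqrt_sq_eq_abs x).symm
        _ ≤ r := Real.sqrt_le_sqrt (by nlinarith)
    have hcos : Real.cos (sphPhi w) = x / r := by
      rw [hphi]
      apply Real.cos_arccos
      · rw [neg_le, ← neg_div]
        exact (div_le_one hrpos).2 (by cases abs_le.1 habs; linarith)
      · exact (div_le_one hrpos).2 (le_of_abs_le habs)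
    have hsin : Real.sin (sphPhi w) = |y| / r := by
      rw [hphi, Real.sin_arccos]
      have h1 : 1 - (x / r) ^ 2 = y ^ 2 / r ^ 2 := by
        field_simp
        linarith [hr2]
      rw [h1, Real.sqrt_div (sq_nonneg y), Real.sqrt_sq_eq_abs, Real.sqrt_sq hrpos.le]
    have hcos2 : r ^ 2 * Real.cos (2 * sphPhi w) = x ^ 2 - y ^ 2 := by
      rw [Real.cos_two_mul, hcos, div_pow]
      field_simp
      linarith [hr2]
    have hsin2 : r ^ 2 * Real.sin (2 * sphPhi w) = 2 * x * |y| := by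
      rw [Real.sin_two_mul, hsin, hcos]
      field_simp
    have hrho : sphRho w ^ 2 = r ^ 2 := by rw [sphRho, hnorm]
    rw [sCoord]; refine Quaternion.ext_iff.2 ?_
    have himK : sphRho w ^ 2 * Real.cos (2 * sphPhi w) = x ^ 2 - y ^ 2 := by
      rw [hrho, hcos2]
    by_cases hy : y = 0
    · have hs0 : Real.sin (2 * sphPhi w) = 0 := by
        have := hsin2
        rw [hy] at this
        simp at this
        rcases this with h | h
        · exact absurd h hrne
        · exact h
      refine ⟨rfl, ?_, ?_, himK⟩ <;>
        · show sphRho w ^ 2 * (Real.sin (2 * sphPhi w) * _) = 2 * x * y * _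
          rw [hs0, hy]; ring
    · have hyne : |y| ≠ 0 := abs_ne_zero.2 hy
      have hcond : ¬ (w.imI = 0 ∧ w.imJ = 0) := by
        rw [hwI, hwJ]
        rcases hbc' with h | h
        · exact fun hcon => (mul_ne_zero hy (div_ne_zero h hβne)) hcon.1
        · exact fun hcon => (mul_ne_zero hy (div_ne_zero h hβne)) hcon.2
      have hz0 : (⟨w.imI, w.imJ⟩ : ℂ) ≠ 0 := by
        intro h
        rw [Complex.ext_iff] at h
        exact hcond ⟨h.1, h.2⟩
      have habs0 : ‖(⟨w.imI, w.imJ⟩ : ℂ)‖ = |y| := by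
        rw [Complex.norm_def, Complex.normSq_mk, hwI, hwJ, ← Real.sqrt_sq_eq_abs]
        congr 1
        linear_combination y ^ 2 * hunit
      have hθc : Real.cos (sphTheta w) = y * (b / β) / |y| := by
        rw [sphTheta, if_neg hcond]
        split_ifs with h
        · rw [Real.cos_add_two_pi, Complex.cos_arg hz0, habs0, hwI]
        · rw [Complex.cos_arg hz0, habs0, hwI]
      have hθs : Real.sin (sphTheta w) = y * (c / β) / |y| := by
        rw [sphTheta, if_neg hcond]
        split_ifs with h
        · rw [Real.sin_add_two_pi, Complex.sin_arg, habs0, hwJ]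
        · rw [Complex.sin_arg, habs0, hwJ]
      have hyy : |y| * (y / |y|) = y := by
        field_simp
      refine ⟨rfl, ?_, ?_, himK⟩
      · show sphRho w ^ 2 * (Real.sin (2 * sphPhi w) * Real.cos (sphTheta w)) = 2 * x * y * (b / β)
        rw [hrho, ← mul_assoc, hsin2, hθc]
        field_simp
      · show sphRho w ^ 2 * (Real.sin (2 * sphPhi w) * Real.sin (sphTheta w)) = 2 * x * y * (c / β)
        rw [hrho, ← mul_assoc, hsin2, hθs]
        field_simp



private lemma Qstep (a b c x y : ℝ) (hbc : (b, c) ≠ (0, 0)) :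
    sCoord (sphRho (qmk 0 (y * (b / Real.sqrt (b ^ 2 + c ^ 2))) (y * (c / Real.sqrt (b ^ 2 + c ^ 2))) x) ^ 2)
        (sphTheta (qmk 0 (y * (b / Real.sqrt (b ^ 2 + c ^ 2))) (y * (c / Real.sqrt (b ^ 2 + c ^ 2))) x))
        (2 * sphPhi (qmk 0 (y * (b / Real.sqrt (b ^ 2 + c ^ 2))) (y * (c / Real.sqrt (b ^ 2 + c ^ 2))) x)) +
      qmk 0 b c a =
      qmk 0 ((2 * x * y + Real.sqrt (b ^ 2 + c ^ 2)) * (b / Real.sqrt (b ^ 2 + c ^ 2)))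
          ((2 * x * y + Real.sqrt (b ^ 2 + c ^ 2)) * (c / Real.sqrt (b ^ 2 + c ^ 2)))
          (x ^ 2 - y ^ 2 + a) := by
  have hbc' : b ≠ 0 ∨ c ≠ 0 := by
    by_contra h; push_neg at h; exact hbc (by simp [h.1, h.2])
  have hpos : 0 < b ^ 2 + c ^ 2 := by rcases hbc' with h | h <;> positivity
  have hβne : Real.sqrt (b ^ 2 + c ^ 2) ≠ 0 := (Real.sqrt_pos.2 hpos).ne'
  show sCoord _ _ _ + _ = _
  rw [qmk, qmk, qmk, Qcore b c x y hbc]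
  refine Quaternion.ext_iff.2 ?_
  simp only [ Quaternion.re_add, Quaternion.imI_add, Quaternion.imJ_add,
    Quaternion.imK_add]
  refine ⟨by show (0:ℝ) + 0 = 0; norm_num, ?_, ?_, by show x ^ 2 - y ^ 2 + a = x ^ 2 - y ^ 2 + a; rfl⟩
  · show 2 * x * y * (b / Real.sqrt (b ^ 2 + c ^ 2)) + b = _
    field_simp
  · show 2 * x * y * (c / Real.sqrt (b ^ 2 + c ^ 2)) + c = _
    field_simp

private lemma Pstep (a b c x y : ℝ) (hbc : (b, c) ≠ (0, 0)) :
    (qmk x (y * (b / Real.sqrt (b ^ 2 + c ^ 2))) (y * (c / Real.sqrt (b ^ 2 + c ^ 2))) 0) ^ 2 +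
      qmk a b c 0 =
      qmk (x ^ 2 - y ^ 2 + a) ((2 * x * y + Real.sqrt (b ^ 2 + c ^ 2)) * (b / Real.sqrt (b ^ 2 + c ^ 2)))
          ((2 * x * y + Real.sqrt (b ^ 2 + c ^ 2)) * (c / Real.sqrt (b ^ 2 + c ^ 2))) 0 := by
  have hbc' : b ≠ 0 ∨ c ≠ 0 := by
    by_contra h; push_neg at h; exact hbc (by simp [h.1, h.2])
  have hpos : 0 < b ^ 2 + c ^ 2 := by rcases hbc' with h | h <;> positivity
  have hβ2 : Real.sqrt (b ^ 2 + c ^ 2) ^ 2 = b ^ 2 + c ^ 2 := Real.sq_sqrt hpos.le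
  have hβne : Real.sqrt (b ^ 2 + c ^ 2) ≠ 0 := (Real.sqrt_pos.2 hpos).ne'
  rw [sq]
  refine Quaternion.ext_iff.2 ?_
  simp only [Quaternion.re_add, Quaternion.imI_add, Quaternion.imJ_add,
    Quaternion.imK_add, Quaternion.re_mul, Quaternion.imI_mul, Quaternion.imJ_mul, Quaternion.imK_mul]
  simp only [qmk]
  refine ⟨?_, ?_, ?_, ?_⟩
  · have hunit : (b / Real.sqrt (b ^ 2 + c ^ 2)) ^ 2 + (c / Real.sqrt (b ^ 2 + c ^ 2)) ^ 2 = 1 := by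
      field_simp
      exact hβ2.symm
    linear_combination (-(y ^ 2)) * hunit
  · show _ = _
    field_simp; ring
  · show _ = _
    field_simp; ring
  · show _ = _
    ring

theorem sprod21_same_dynamics_as_H1ij (a b c : ℝ) (hbc : (b, c) ≠ (0, 0)) :
    (∃ ρ φ : ℕ → ℝ, ∀ n : ℕ, 1 ≤ n →
      (fun w : ℍ[ℝ] =>
          sCoord (sphRho w ^ 2) (sphTheta w) (2 * sphPhi w) + qmk 0 b c a)^[n] 0 =
        qmk 0 (ρ n * Real.sin (φ n) * (b / Real.sqrt (b ^ 2 + c ^ 2)))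
          (ρ n * Real.sin (φ n) * (c / Real.sqrt (b ^ 2 + c ^ 2)))
          (ρ n * Real.cos (φ n)) ∧
      (fun z : ℍ[ℝ] => z ^ 2 + qmk a b c 0)^[n] 0 =
        qmk (ρ n * Real.cos (φ n))
          (ρ n * Real.sin (φ n) * (b / Real.sqrt (b ^ 2 + c ^ 2)))
          (ρ n * Real.sin (φ n) * (c / Real.sqrt (b ^ 2 + c ^ 2))) 0) ∧
    (Bornology.IsBounded
        (Set.range fun n : ℕ =>
          (fun w : ℍ[ℝ] =>
            sCoord (sphRho w ^ 2) (sphTheta w) (2 * sphPhi w) + qmk 0 b c a)^[n] 0) ↔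
      Bornology.IsBounded
        (Set.range fun n : ℕ =>
          (fun z : ℍ[ℝ] => z ^ 2 + qmk a b c 0)^[n] 0)) := by
  set Z : ℕ → ℂ := fun n => (fun z : ℂ => z ^ 2 + ⟨a, Real.sqrt (b ^ 2 + c ^ 2)⟩)^[n] 0 with hZ
  have main : ∀ n : ℕ,
      (fun w : ℍ[ℝ] => sCoord (sphRho w ^ 2) (sphTheta w) (2 * sphPhi w) + qmk 0 b c a)^[n] 0 =
        qmk 0 ((Z n).im * (b / Real.sqrt (b ^ 2 + c ^ 2)))
          ((Z n).im * (c / Real.sqrt (b ^ 2 + c ^ 2))) (Z n).re ∧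
      (fun z : ℍ[ℝ] => z ^ 2 + qmk a b c 0)^[n] 0 =
        qmk (Z n).re ((Z n).im * (b / Real.sqrt (b ^ 2 + c ^ 2)))
          ((Z n).im * (c / Real.sqrt (b ^ 2 + c ^ 2))) 0 := by
    intro n
    induction n with
    | zero =>
      constructor <;> simp [hZ, qmk, Quaternion.ext_iff] <;> rfl
    | succ n ih =>
      have hZs : Z (n + 1) = Z n ^ 2 + ⟨a, Real.sqrt (b ^ 2 + c ^ 2)⟩ :=
        Function.iterate_succ_apply' _ n 0
      have hre : (Z (n + 1)).re = (Z n).re ^ 2 - (Z n).im ^ 2 + a := by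
        rw [hZs, pow_two]
        simp [Complex.add_re, Complex.mul_re]
        ring
      have him : (Z (n + 1)).im = 2 * (Z n).re * (Z n).im + Real.sqrt (b ^ 2 + c ^ 2) := by
        rw [hZs, pow_two]
        simp [Complex.add_im, Complex.mul_im]
        ring
      constructor
      · rw [Function.iterate_succ_apply', ih.1]
        show sCoord _ _ _ + qmk 0 b c a = _
        rw [Qstep a b c (Z n).re (Z n).im hbc, hre, him]
      · rw [Function.iterate_succ_apply', ih.2]
        show _ ^ 2 + qmk a b c 0 = _
        rw [Pstep a b c (Z n).re (Z n).im hbc, hre, him]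
  constructor
  · refine ⟨fun n => ‖Z n‖, fun n => Complex.arg (Z n), fun n _ => ?_⟩
    constructor
    · rw [(main n).1, Complex.norm_mul_cos_arg, Complex.norm_mul_sin_arg]
    · rw [(main n).2, Complex.norm_mul_cos_arg, Complex.norm_mul_sin_arg]
  · have hnorm : ∀ n : ℕ,
        ‖(fun w : ℍ[ℝ] =>
            sCoord (sphRho w ^ 2) (sphTheta w) (2 * sphPhi w) + qmk 0 b c a)^[n] 0‖ =
          ‖(fun z : ℍ[ℝ] => z ^ 2 + qmk a b c 0)^[n] 0‖ := by
      intro n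
      rw [(main n).1, (main n).2, qnorm_eq, qnorm_eq]
      simp only [qmk]
      congr 1
      ring
    rw [isBounded_iff_forall_norm_le, isBounded_iff_forall_norm_le]
    constructor <;> rintro ⟨C, hC⟩ <;> refine ⟨C, ?_⟩ <;> rintro x ⟨n, rfl⟩
    · rw [← hnorm n]
      exact hC _ ⟨n, rfl⟩
    · rw [hnorm n]
      exact hC _ ⟨n, rfl⟩
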